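/- Let μ be a norm on F_∞^n. Then: (1) there exists a family λ_1, …, λ_n ∈ Λ such that for each 1 ≤ i ≤ n, setting Λ_{i−1} = Σ_{j=1}^{i−1} A·λ_j, one has λ_i ∉ Λ_{i−1} and μ(λ_i) ≤ μ(λ) for every λ ∈ Λ ∖ Λ_{i−1}; (2) if (λ_1, …, λ_n) and (λ'_1, …, λ'_n) are two families in Λ both satisfying these conditions, then μ(λ_i) = μ(λ'_i) for every 1 ≤ i ≤ n. -/

import Mathlib

noncomputable section

/-- The data of the field `F_∞ = F_q((1/T))`, the completion of `F_q(T)` at the place at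
infinity, packaged axiomatically: a field `Finf` which is an `F_q[T]`-algebra, together with
its standard absolute value `v` (so `v a = q^{deg a}` for nonzero `a ∈ A = F_q[T]`), such
that every element is a polynomial plus an element of absolute value `< 1`, and which is
complete. -/
structure InftySetup (Fq : Type*) [Field Fq] [Fintype Fq]
    (Finf : Type*) [Field Finf] [Algebra (Polynomial Fq) Finf] : Type _ where
  /-- the standard absolute value of `F_∞` -/
  v : Finf → ℝ
  v_zero : v 0 = 0
  v_pos : ∀ x : Finf, x ≠ 0 → 0 < v x
  v_mul : ∀ x y : Finf, v (x * y) = v x * v y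
  v_add : ∀ x y : Finf, v (x + y) ≤ max (v x) (v y)
  /-- `|a| = q^{deg a}` for nonzero `a ∈ A` -/
  v_poly : ∀ a : Polynomial Fq, a ≠ 0 →
    v (algebraMap (Polynomial Fq) Finf a) = (Fintype.card Fq : ℝ) ^ a.natDegree
  /-- `F_∞ = A + m_∞` -/
  poly_dense : ∀ x : Finf, ∃ a : Polynomial Fq,
    v (x - algebraMap (Polynomial Fq) Finf a) < 1
  /-- `F_∞` is complete -/
  complete : ∀ f : ℕ → Finf,
    (∀ ε : ℝ, 0 < ε → ∃ N : ℕ, ∀ m ≥ N, ∀ k ≥ N, v (f m - f k) < ε) →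
    ∃ l : Finf, ∀ ε : ℝ, 0 < ε → ∃ N : ℕ, ∀ m ≥ N, v (f m - l) < ε

namespace InftySetup

variable {Fq : Type*} [Field Fq] [Fintype Fq]
variable {Finf : Type*} [Field Finf] [Algebra (Polynomial Fq) Finf]

/-- A norm on the `F_∞`-vector space `F_∞^n`. -/
def IsNorm (D : InftySetup Fq Finf) {n : ℕ} (μ : (Fin n → Finf) → ℝ) : Prop :=
  (∀ (a : Finf) (x : Fin n → Finf), μ (a • x) = D.v a * μ x) ∧
  (∀ x y : Fin n → Finf, μ (x + y) ≤ max (μ x) (μ y)) ∧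
  (∀ x : Fin n → Finf, x ≠ 0 → 0 < μ x)

end InftySetup

/-- The lattice `Λ = A^n ⊆ F_∞^n`. -/
def LambdaSet (Fq : Type*) [Field Fq] [Fintype Fq]
    (Finf : Type*) [Field Finf] [Algebra (Polynomial Fq) Finf] (n : ℕ) :
    Set (Fin n → Finf) :=
  {x | ∀ i, ∃ a : Polynomial Fq, x i = algebraMap (Polynomial Fq) Finf a}

/-- `Λ_{i-1} = Σ_{j<i} A·λ_j`, the `A`-span of `λ_j` for `j < i`. -/
def partialSpan (Fq : Type*) [Field Fq] [Fintype Fq]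
    {Finf : Type*} [Field Finf] [Algebra (Polynomial Fq) Finf] {n : ℕ}
    (lam : Fin n → (Fin n → Finf)) (i : Fin n) : Set (Fin n → Finf) :=
  {x | ∃ c : Fin n → Polynomial Fq, (∀ j, ¬ j < i → c j = 0) ∧
    x = ∑ j, algebraMap (Polynomial Fq) Finf (c j) • lam j}

/-- Condition (i): `(λ_1, …, λ_n)` is an `A`-basis of `Λ` with `μ(λ_i) ≤ μ(λ_{i+1})` which is
orthonormal for `μ`. -/
def CondI {Fq : Type*} [Field Fq] [Fintype Fq]
    {Finf : Type*} [Field Finf] [Algebra (Polynomial Fq) Finf] {n : ℕ}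
    (D : InftySetup Fq Finf) (μ : (Fin n → Finf) → ℝ)
    (lam : Fin n → (Fin n → Finf)) : Prop :=
  (∀ x ∈ LambdaSet Fq Finf n, ∃! c : Fin n → Polynomial Fq,
      x = ∑ j, algebraMap (Polynomial Fq) Finf (c j) • lam j) ∧
  (Monotone fun i => μ (lam i)) ∧
  (∀ x : Fin n → Finf, μ (∑ i, x i • lam i) = ⨆ i, D.v (x i) * μ (lam i))

/-- Condition (ii): for each `i`, `λ_i ∉ Λ_{i-1}` and `λ_i` has the smallest norm among
`Λ ∖ Λ_{i-1}`. -/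
def CondII (Fq : Type*) [Field Fq] [Fintype Fq]
    {Finf : Type*} [Field Finf] [Algebra (Polynomial Fq) Finf] {n : ℕ}
    (μ : (Fin n → Finf) → ℝ) (lam : Fin n → (Fin n → Finf)) : Prop :=
  ∀ i : Fin n, lam i ∉ partialSpan Fq lam i ∧
    ∀ y ∈ LambdaSet Fq Finf n, y ∉ partialSpan Fq lam i → μ (lam i) ≤ μ y

section Helpers

variable {Fq : Type*} [Field Fq] [Fintype Fq]
variable {Finf : Type*} [Field Finf] [Algebra (Polynomial Fq) Finf]

lemma two_le_q : (2 : ℝ) ≤ (Fintype.card Fq : ℝ) := by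
  exact_mod_cast Fintype.one_lt_card

namespace InftySetup

variable (D : InftySetup Fq Finf)

lemma v_nonneg (x : Finf) : 0 ≤ D.v x := by
  rcases eq_or_ne x 0 with h | h
  · simp [h, D.v_zero]
  · exact (D.v_pos x h).le

lemma v_one : D.v 1 = 1 := by
  have h := D.v_mul 1 1
  rw [one_mul] at h
  have h1 := D.v_pos 1 one_ne_zero
  nlinarith

lemma v_neg (x : Finf) : D.v (-x) = D.v x := by
  have hm : D.v (-1 : Finf) * D.v (-1 : Finf) = 1 := by
    rw [← D.v_mul]; norm_num [D.v_one]
  have h1 : D.v (-1 : Finf) = 1 := by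
    have := D.v_pos (-1 : Finf) (by norm_num)
    nlinarith
  calc D.v (-x) = D.v ((-1) * x) := by ring_nf
    _ = D.v x := by rw [D.v_mul, h1, one_mul]

/-- the additive group norm on `Finf` given by `D.v` -/
def agn : AddGroupNorm Finf where
  toFun := D.v
  map_zero' := D.v_zero
  add_le' := fun x y => (D.v_add x y).trans
    (max_le (le_add_of_nonneg_right (D.v_nonneg y)) (le_add_of_nonneg_left (D.v_nonneg x)))
  neg' := D.v_neg
  eq_zero_of_map_eq_zero' := fun x hx => by
    by_contra h
    exact absurd hx (ne_of_gt (D.v_pos x h))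

/-- `Finf` as a normed field -/
@[reducible]
def nfield : NormedField Finf :=
  letI g : NormedAddCommGroup Finf := D.agn.toNormedAddCommGroup
  { toNorm := g.toNorm
    toField := ‹Field Finf›
    toMetricSpace := g.toMetricSpace
    dist_eq := g.dist_eq
    norm_mul := fun a b => by exact D.v_mul a b }

lemma nfield_norm_eq (x : Finf) : @norm Finf D.nfield.toNorm x = D.v x := rfl

include D in
lemma algebraMap_ne_zero {a : Polynomial Fq} (ha : a ≠ 0) :
    algebraMap (Polynomial Fq) Finf a ≠ 0 := by
  intro h
  have hv := D.v_poly a ha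
  rw [h, D.v_zero] at hv
  have hq : (0:ℝ) < (Fintype.card Fq : ℝ) ^ a.natDegree :=
    pow_pos (by linarith [two_le_q (Fq := Fq)]) _
  linarith

/-- `Finf` as a nontrivially normed field -/
@[reducible]
def nnfield : NontriviallyNormedField Finf :=
  { D.nfield with
    non_trivial := by
      refine ⟨algebraMap (Polynomial Fq) Finf Polynomial.X, ?_⟩
      have h := D.v_poly Polynomial.X Polynomial.X_ne_zero
      rw [Polynomial.natDegree_X, pow_one] at h
      show (1:ℝ) < @norm Finf D.nfield.toNorm _
      rw [D.nfield_norm_eq, h]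
      linarith [two_le_q (Fq := Fq)] }

end InftySetup

end Helpers

section MuSpaceDef

/-- type synonym (as a structure, to avoid instance clashes) carrying the `μ`-norm -/
structure MuSpace (Finf : Type*) (n : ℕ) where
  /-- underlying vector -/
  out : Fin n → Finf

namespace MuSpace

variable {Finf : Type*} [Field Finf] {n : ℕ}

lemma out_injective : Function.Injective (MuSpace.out (Finf := Finf) (n := n)) := by
  rintro ⟨a⟩ ⟨b⟩ h
  simpa using h

instance : Zero (MuSpace Finf n) := ⟨⟨0⟩⟩
instance : Add (MuSpace Finf n) := ⟨fun x y => ⟨x.out + y.out⟩⟩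
instance : Neg (MuSpace Finf n) := ⟨fun x => ⟨-x.out⟩⟩
instance : Sub (MuSpace Finf n) := ⟨fun x y => ⟨x.out - y.out⟩⟩
instance : SMul ℕ (MuSpace Finf n) := ⟨fun c x => ⟨c • x.out⟩⟩
instance : SMul ℤ (MuSpace Finf n) := ⟨fun c x => ⟨c • x.out⟩⟩
instance : SMul Finf (MuSpace Finf n) := ⟨fun c x => ⟨c • x.out⟩⟩

instance : AddCommGroup (MuSpace Finf n) :=
  Function.Injective.addCommGroup MuSpace.out out_injective rfl (fun _ _ => rfl)
    (fun _ => rfl) (fun _ _ => rfl) (fun _ _ => rfl) (fun _ _ => rfl)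

/-- `out` as an `AddMonoidHom` -/
def outHom : MuSpace Finf n →+ (Fin n → Finf) :=
  { toFun := MuSpace.out, map_zero' := rfl, map_add' := fun _ _ => rfl }

instance : Module Finf (MuSpace Finf n) :=
  Function.Injective.module Finf outHom out_injective (fun _ _ => rfl)

/-- `out` as a linear equivalence -/
def outLinear : MuSpace Finf n ≃ₗ[Finf] (Fin n → Finf) :=
  { toFun := MuSpace.out, map_add' := fun _ _ => rfl, map_smul' := fun _ _ => rfl,
    invFun := MuSpace.mk, left_inv := fun _ => rfl, right_inv := fun _ => rfl }

instance : FiniteDimensional Finf (MuSpace Finf n) :=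
  LinearEquiv.finiteDimensional (outLinear (Finf := Finf) (n := n)).symm

end MuSpace

end MuSpaceDef


section Helpers2

variable {Fq : Type*} [Field Fq] [Fintype Fq]
variable {Finf : Type*} [Field Finf] [Algebra (Polynomial Fq) Finf]

namespace InftySetup

variable (D : InftySetup Fq Finf)

lemma mu_zero {n : ℕ} {μ : (Fin n → Finf) → ℝ} (hμ : D.IsNorm μ) : μ 0 = 0 := by
  have h := hμ.1 0 0
  simpa [D.v_zero] using h

lemma mu_nonneg {n : ℕ} {μ : (Fin n → Finf) → ℝ} (hμ : D.IsNorm μ) (x : Fin n → Finf) :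
    0 ≤ μ x := by
  rcases eq_or_ne x 0 with h | h
  · simp [h, D.mu_zero hμ]
  · exact (hμ.2.2 x h).le

lemma mu_neg {n : ℕ} {μ : (Fin n → Finf) → ℝ} (hμ : D.IsNorm μ) (x : Fin n → Finf) :
    μ (-x) = μ x := by
  have h := hμ.1 (-1) x
  have hv : D.v (-1 : Finf) = 1 := by
    have := D.v_neg (1 : Finf)
    rwa [D.v_one] at this
  simpa [hv] using h

/-- the additive group norm `μ` on `MuSpace` -/
def muAGN {n : ℕ} (μ : (Fin n → Finf) → ℝ) (hμ : D.IsNorm μ) :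
    AddGroupNorm (MuSpace Finf n) where
  toFun := fun x => μ x.out
  map_zero' := D.mu_zero hμ
  add_le' := fun x y => (hμ.2.1 x.out y.out).trans
    (max_le (le_add_of_nonneg_right (D.mu_nonneg hμ y.out))
      (le_add_of_nonneg_left (D.mu_nonneg hμ x.out)))
  neg' := fun x => D.mu_neg hμ x.out
  eq_zero_of_map_eq_zero' := fun x hx => by
    by_contra h
    have hout : x.out ≠ 0 := by
      intro h0
      exact h (MuSpace.out_injective h0)
    exact absurd hx (ne_of_gt (hμ.2.2 x.out hout))

theorem exists_min {n : ℕ} (μ : (Fin n → Finf) → ℝ)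
    (hμ : D.IsNorm μ) (S : Set (Fin n → Finf)) (hS : S ⊆ LambdaSet Fq Finf n)
    (hne : S.Nonempty) : ∃ m ∈ S, ∀ y ∈ S, μ m ≤ μ y := by
  classical
  letI : NontriviallyNormedField Finf := D.nnfield
  haveI : CompleteSpace Finf := by
    apply Metric.complete_of_cauchySeq_tendsto
    intro u hu
    rw [Metric.cauchySeq_iff] at hu
    obtain ⟨l, hl⟩ := D.complete u (by
      intro ε hε
      obtain ⟨N, hN⟩ := hu ε hε
      exact ⟨N, fun m hm k hk => by
        have h := hN m hm k hk
        rw [dist_eq_norm] at h; exact h⟩)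
    refine ⟨l, Metric.tendsto_atTop.2 fun ε hε => ?_⟩
    obtain ⟨N, hN⟩ := hl ε hε
    exact ⟨N, fun m hm => by rw [dist_eq_norm]; exact hN m hm⟩
  letI : NormedAddCommGroup (MuSpace Finf n) := (D.muAGN μ hμ).toNormedAddCommGroup
  letI : NormedSpace Finf (MuSpace Finf n) :=
    ⟨fun {a x} => le_of_eq (by exact hμ.1 a x.out)⟩
  let f : MuSpace Finf n →ₗ[Finf] (Fin n → Finf) := MuSpace.outLinear.toLinearMap
  have hf : Continuous f := f.continuous_of_finiteDimensional
  let g : MuSpace Finf n →L[Finf] (Fin n → Finf) := ⟨f, hf⟩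
  obtain ⟨C, hC, hb⟩ := g.bound
  have key : ∀ x : Fin n → Finf, ∀ i, D.v (x i) ≤ C * μ x := by
    intro x i
    have h1 : ‖x i‖ ≤ ‖x‖ := norm_le_pi_norm x i
    have h2 := hb (MuSpace.mk x)
    have h3 : g (MuSpace.mk x) = x := rfl
    have h4 : ‖MuSpace.mk x‖ = μ x := rfl
    rw [h3, h4] at h2
    calc D.v (x i) = ‖x i‖ := (D.nfield_norm_eq _).symm
      _ ≤ ‖x‖ := h1
      _ ≤ C * μ x := h2
  obtain ⟨x0, hx0⟩ := hne
  set R := C * μ x0 with hR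
  set d := Nat.floor R with hd
  have hPfin : {a : Polynomial Fq | a.natDegree ≤ d}.Finite := by
    rw [← Set.finite_coe_iff]
    apply Finite.of_injective
      (fun (a : {a : Polynomial Fq | a.natDegree ≤ d}) (k : Fin (d+1)) =>
        (a : Polynomial Fq).coeff k)
    intro a b hab
    apply Subtype.ext
    apply Polynomial.ext
    intro m
    by_cases hm : m ≤ d
    · exact congrFun hab ⟨m, Nat.lt_succ_of_le hm⟩
    · push_neg at hm
      rw [Polynomial.coeff_eq_zero_of_natDegree_lt (lt_of_le_of_lt a.2 hm),
        Polynomial.coeff_eq_zero_of_natDegree_lt (lt_of_le_of_lt b.2 hm)]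
  have hQfin :
      ((algebraMap (Polynomial Fq) Finf) '' {a : Polynomial Fq | a.natDegree ≤ d}).Finite :=
    hPfin.image _
  have hTsub : {y | y ∈ S ∧ μ y ≤ μ x0} ⊆
      {y : Fin n → Finf | ∀ i, y i ∈
        (algebraMap (Polynomial Fq) Finf) '' {a : Polynomial Fq | a.natDegree ≤ d}} := by
    rintro y ⟨hyS, hyμ⟩ i
    obtain ⟨a, hai⟩ := hS hyS i
    refine ⟨a, ?_, hai.symm⟩
    rcases eq_or_ne a 0 with h0 | h0
    · simp [h0]
    · have hv : D.v (y i) = (Fintype.card Fq : ℝ) ^ a.natDegree := by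
        rw [hai]; exact D.v_poly a h0
      have hle : D.v (y i) ≤ R := by
        calc D.v (y i) ≤ C * μ y := key y i
          _ ≤ C * μ x0 := mul_le_mul_of_nonneg_left hyμ hC.le
      have h2q : (2:ℝ) ^ a.natDegree ≤ (Fintype.card Fq : ℝ) ^ a.natDegree :=
        pow_le_pow_left₀ (by norm_num) (two_le_q (Fq := Fq)) _
      have hlt : (a.natDegree : ℝ) < 2 ^ a.natDegree := by
        exact_mod_cast Nat.lt_two_pow_self (n := a.natDegree)
      have hfin : (a.natDegree : ℝ) ≤ R := by
        rw [hv] at hle; linarith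
      exact Nat.le_floor hfin
  have hTfin : {y | y ∈ S ∧ μ y ≤ μ x0}.Finite :=
    Set.Finite.subset (Set.Finite.pi' (fun _ => hQfin)) hTsub
  have hx0T : x0 ∈ hTfin.toFinset := by
    rw [Set.Finite.mem_toFinset]; exact ⟨hx0, le_refl _⟩
  obtain ⟨m, hmT, hmin⟩ := hTfin.toFinset.exists_min_image μ ⟨x0, hx0T⟩
  rw [Set.Finite.mem_toFinset] at hmT
  refine ⟨m, hmT.1, fun y hy => ?_⟩
  by_cases hyle : μ y ≤ μ x0
  · exact hmin y (by rw [Set.Finite.mem_toFinset]; exact ⟨hy, hyle⟩)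
  · push_neg at hyle
    exact le_trans (hmin x0 hx0T) hyle.le

end InftySetup

end Helpers2

section Helpers3

variable {Fq : Type*} [Field Fq] [Fintype Fq]
variable {Finf : Type*} [Field Finf] [Algebra (Polynomial Fq) Finf]
variable {n : ℕ}

lemma lambda_zero : (0 : Fin n → Finf) ∈ LambdaSet Fq Finf n :=
  fun _ => ⟨0, by simp⟩

lemma lambda_add {x y : Fin n → Finf} (hx : x ∈ LambdaSet Fq Finf n)
    (hy : y ∈ LambdaSet Fq Finf n) : x + y ∈ LambdaSet Fq Finf n := by
  intro i
  obtain ⟨a, ha⟩ := hx i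
  obtain ⟨b, hb⟩ := hy i
  exact ⟨a + b, by simp [Pi.add_apply, ha, hb, map_add]⟩

lemma lambda_sub {x y : Fin n → Finf} (hx : x ∈ LambdaSet Fq Finf n)
    (hy : y ∈ LambdaSet Fq Finf n) : x - y ∈ LambdaSet Fq Finf n := by
  intro i
  obtain ⟨a, ha⟩ := hx i
  obtain ⟨b, hb⟩ := hy i
  exact ⟨a - b, by simp [Pi.sub_apply, ha, hb, map_sub]⟩

lemma lambda_asmul (a : Polynomial Fq) {x : Fin n → Finf} (hx : x ∈ LambdaSet Fq Finf n) :
    algebraMap (Polynomial Fq) Finf a • x ∈ LambdaSet Fq Finf n := by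
  intro i
  obtain ⟨b, hb⟩ := hx i
  exact ⟨a * b, by simp [Pi.smul_apply, hb, map_mul, smul_eq_mul]⟩

lemma lambda_sum {ι : Type*} (s : Finset ι) (f : ι → (Fin n → Finf))
    (h : ∀ j ∈ s, f j ∈ LambdaSet Fq Finf n) : (∑ j ∈ s, f j) ∈ LambdaSet Fq Finf n := by
  classical
  induction s using Finset.cons_induction with
  | empty => simpa using lambda_zero
  | cons a s ha ih =>
    rw [Finset.sum_cons]
    exact lambda_add (h a (Finset.mem_cons_self a s)) (ih fun j hj => h j (Finset.mem_cons_of_mem hj))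

lemma partialSpan_sum_congr {lam lam' : Fin n → (Fin n → Finf)} {i : Fin n}
    (h : ∀ j, j < i → lam j = lam' j) (c : Fin n → Polynomial Fq)
    (hc : ∀ j, ¬ j < i → c j = 0) :
    ∑ j, algebraMap (Polynomial Fq) Finf (c j) • lam j
      = ∑ j, algebraMap (Polynomial Fq) Finf (c j) • lam' j := by
  refine Finset.sum_congr rfl fun j _ => ?_
  by_cases hj : j < i
  · rw [h j hj]
  · rw [hc j hj]; simp

lemma partialSpan_congr {lam lam' : Fin n → (Fin n → Finf)} {i : Fin n}
    (h : ∀ j, j < i → lam j = lam' j) :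
    partialSpan Fq lam i = partialSpan Fq lam' i := by
  ext x
  constructor
  · rintro ⟨c, hc, rfl⟩
    exact ⟨c, hc, partialSpan_sum_congr h c hc⟩
  · rintro ⟨c, hc, rfl⟩
    exact ⟨c, hc, (partialSpan_sum_congr h c hc).symm⟩

lemma zero_mem_partialSpan (lam : Fin n → (Fin n → Finf)) (i : Fin n) :
    (0 : Fin n → Finf) ∈ partialSpan Fq lam i :=
  ⟨0, fun _ _ => rfl, by simp⟩

lemma partialSpan_mono (lam : Fin n → (Fin n → Finf)) {i i' : Fin n} (h : i ≤ i') :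
    partialSpan Fq lam i ⊆ partialSpan Fq lam i' := by
  rintro x ⟨c, hc, rfl⟩
  exact ⟨c, fun j hj => hc j (fun hji => hj (lt_of_lt_of_le hji h)), rfl⟩

lemma partialSpan_add_combo {lam : Fin n → (Fin n → Finf)} {i : Fin n} {x : Fin n → Finf}
    (hx : x ∈ partialSpan Fq lam i) (a : Fin n → Polynomial Fq)
    (ha : ∀ j, ¬ j < i → a j = 0) :
    x + ∑ j, algebraMap (Polynomial Fq) Finf (a j) • lam j ∈ partialSpan Fq lam i := by
  obtain ⟨c, hc, rfl⟩ := hx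
  refine ⟨fun j => c j + a j, fun j hj => by simp [hc j hj, ha j hj], ?_⟩
  rw [← Finset.sum_add_distrib]
  exact Finset.sum_congr rfl fun j _ => by rw [map_add, add_smul]

lemma partialSpan_subset_span (lam : Fin n → (Fin n → Finf)) (i : Fin n) :
    partialSpan Fq lam i ⊆ ↑(Submodule.span Finf (lam '' {j : Fin n | j < i})) := by
  rintro x ⟨c, hc, rfl⟩
  apply Submodule.sum_mem
  intro j _
  by_cases hj : j < i
  · exact Submodule.smul_mem _ _ (Submodule.subset_span ⟨j, hj, rfl⟩)
  · rw [hc j hj]; simp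

lemma image_eq_range (lam : Fin n → (Fin n → Finf)) (i : Fin n) :
    lam '' {j : Fin n | j < i}
      = Set.range (fun k : Fin i.val => lam ⟨k.val, lt_trans k.isLt i.isLt⟩) := by
  ext x
  constructor
  · rintro ⟨j, hj, rfl⟩
    exact ⟨⟨j.val, hj⟩, by congr⟩
  · rintro ⟨k, rfl⟩
    exact ⟨⟨k.val, lt_trans k.isLt i.isLt⟩, k.isLt, rfl⟩

lemma finrank_partial_le (lam : Fin n → (Fin n → Finf)) (i : Fin n) :
    Module.finrank Finf (Submodule.span Finf (lam '' {j : Fin n | j < i})) ≤ i.val := by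
  rw [image_eq_range]
  have h := finrank_range_le_card (R := Finf)
    (fun k : Fin i.val => lam ⟨k.val, lt_trans k.isLt i.isLt⟩)
  simpa [Set.finrank] using h

lemma single_mem_lambda (k : Fin n) : Pi.single k (1 : Finf) ∈ LambdaSet Fq Finf n := by
  intro i
  rcases eq_or_ne i k with h | h
  · exact ⟨1, by subst h; simp⟩
  · exact ⟨0, by simp [Pi.single_apply, h]⟩

lemma exists_notin_partialSpan (lam : Fin n → (Fin n → Finf)) (i : Fin n) :
    ∃ y ∈ LambdaSet Fq Finf n, y ∉ partialSpan Fq lam i := by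
  classical
  by_contra hcon
  push_neg at hcon
  have hW : ∀ k : Fin n,
      Pi.single k (1 : Finf) ∈ Submodule.span Finf (lam '' {j : Fin n | j < i}) := fun k =>
    partialSpan_subset_span lam i (hcon _ (single_mem_lambda k))
  have htop : Submodule.span Finf (lam '' {j : Fin n | j < i}) = ⊤ := by
    rw [eq_top_iff, ← (Pi.basisFun Finf (Fin n)).span_eq, Submodule.span_le]
    rintro x ⟨k, rfl⟩
    rw [Pi.basisFun_apply]
    exact hW k
  have h1 := finrank_partial_le lam i
  rw [htop, finrank_top, Module.finrank_fin_fun] at h1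
  exact absurd h1 (not_le.mpr i.isLt)

lemma condII_monotone {μ : (Fin n → Finf) → ℝ} {lam : Fin n → (Fin n → Finf)}
    (hlam : ∀ i, lam i ∈ LambdaSet Fq Finf n) (h : CondII Fq μ lam)
    {i j : Fin n} (hij : i ≤ j) : μ (lam i) ≤ μ (lam j) :=
  (h i).2 (lam j) (hlam j) (fun hmem => (h j).1 (partialSpan_mono lam hij hmem))

lemma condII_ne_zero {μ : (Fin n → Finf) → ℝ} {lam : Fin n → (Fin n → Finf)}
    (h : CondII Fq μ lam) (i : Fin n) : lam i ≠ 0 := by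
  intro h0
  exact (h i).1 (h0 ▸ zero_mem_partialSpan lam i)

namespace InftySetup

variable (D : InftySetup Fq Finf)

lemma mu_sum_lt {μ : (Fin n → Finf) → ℝ} (hμ : D.IsNorm μ) {ι : Type*} (s : Finset ι)
    (f : ι → (Fin n → Finf)) {M : ℝ} (hM : 0 < M) (h : ∀ j ∈ s, μ (f j) < M) :
    μ (∑ j ∈ s, f j) < M := by
  classical
  induction s using Finset.cons_induction with
  | empty => simpa [D.mu_zero hμ] using hM
  | cons a s ha ih =>
    rw [Finset.sum_cons]
    exact lt_of_le_of_lt (hμ.2.1 _ _)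
      (max_lt (h a (Finset.mem_cons_self a s)) (ih fun j hj => h j (Finset.mem_cons_of_mem hj)))

lemma condII_linearIndependent {μ : (Fin n → Finf) → ℝ} (hμ : D.IsNorm μ)
    {lam : Fin n → (Fin n → Finf)} (hlam : ∀ i, lam i ∈ LambdaSet Fq Finf n)
    (h : CondII Fq μ lam) : LinearIndependent Finf lam := by
  classical
  rw [Fintype.linearIndependent_iff]
  intro g hg
  by_contra hgne
  push_neg at hgne
  obtain ⟨j0, hj0⟩ := hgne
  set F := Finset.univ.filter (fun j : Fin n => g j ≠ 0) with hF
  have hFne : F.Nonempty := ⟨j0, by simp [hF, hj0]⟩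
  set k := F.max' hFne with hkdef
  have hgk : g k ≠ 0 := (Finset.mem_filter.mp (F.max'_mem hFne)).2
  have hgt : ∀ j, ¬ j ≤ k → g j = 0 := by
    intro j hj
    by_contra hgj
    exact hj (F.le_max' j (by simp [hF, hgj]))
  set y : Fin n → Finf := fun j => if j < k then -(g j / g k) else 0 with hy
  -- lam k is a linear combination of the earlier ones
  have hsplit : ∀ j : Fin n, (if j < k then g j else 0) • lam j
      = g j • lam j - (if j = k then g j • lam j else 0) := by
    intro j
    rcases lt_trichotomy j k with hl | he | hgt'
    · rw [if_pos hl, if_neg (ne_of_lt hl), sub_zero]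
    · have : ¬ j < k := by rw [he]; exact lt_irrefl k
      rw [if_neg this, if_pos he]
      simp
    · have hj0 : g j = 0 := hgt j (not_le.mpr hgt')
      have hne : j ≠ k := ne_of_gt hgt'
      have hnlt : ¬ j < k := not_lt.mpr hgt'.le
      simp [hj0, hne, hnlt]
  have hsum1 : ∑ j, (if j < k then g j else 0) • lam j = - (g k • lam k) := by
    rw [Finset.sum_congr rfl (fun j _ => hsplit j), Finset.sum_sub_distrib, hg,
      Finset.sum_ite_eq' Finset.univ k (fun j => g j • lam j)]
    simp
  have hky : ∀ j, (g k * y j) = -(if j < k then g j else 0) := by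
    intro j
    by_cases hj : j < k
    · simp only [hy, if_pos hj]
      field_simp
    · simp [hy, hj]
  have hk : lam k = ∑ j, y j • lam j := by
    have hz : g k • (lam k - ∑ j, y j • lam j) = 0 := by
      rw [smul_sub, Finset.smul_sum]
      have hterm : ∀ j ∈ Finset.univ, g k • (y j • lam j)
          = (-(if j < k then g j else 0)) • lam j := fun j _ => by
        rw [smul_smul, hky j]
      rw [Finset.sum_congr rfl hterm]
      simp only [neg_smul, Finset.sum_neg_distrib, hsum1]
      simp
    rcases smul_eq_zero.mp hz with hc | hc
    · exact absurd hc hgk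
    · exact sub_eq_zero.mp hc
  -- approximate the coefficients by polynomials
  set a : Fin n → Polynomial Fq :=
    fun j => if j < k then Classical.choose (D.poly_dense (y j)) else 0 with ha
  have haspec : ∀ j, j < k → D.v (y j - algebraMap (Polynomial Fq) Finf (a j)) < 1 := by
    intro j hj
    simp only [ha, if_pos hj]
    exact Classical.choose_spec (D.poly_dense (y j))
  set η := lam k - ∑ j, algebraMap (Polynomial Fq) Finf (a j) • lam j with hη
  have hηsum : η = ∑ j, (y j - algebraMap (Polynomial Fq) Finf (a j)) • lam j := by
    rw [hη]
    conv_lhs => rw [hk]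
    rw [← Finset.sum_sub_distrib]
    exact Finset.sum_congr rfl fun j _ => (sub_smul _ _ _).symm
  have hηΛ : η ∈ LambdaSet Fq Finf n :=
    lambda_sub (hlam k) (lambda_sum _ _ fun j _ => lambda_asmul _ (hlam j))
  have hηnot : η ∉ partialSpan Fq lam k := by
    intro hmem
    have hsupp : ∀ j, ¬ j < k → a j = 0 := fun j hj => by simp [ha, hj]
    have h2 := partialSpan_add_combo hmem a hsupp
    rw [hη, sub_add_cancel] at h2
    exact (h k).1 h2
  have hmin := (h k).2 η hηΛ hηnot
  have hposk : 0 < μ (lam k) := hμ.2.2 _ (condII_ne_zero h k)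
  have hlt : μ η < μ (lam k) := by
    rw [hηsum]
    apply D.mu_sum_lt hμ _ _ hposk
    intro j _
    by_cases hj : j < k
    · have hco := hμ.1 (y j - algebraMap (Polynomial Fq) Finf (a j)) (lam j)
      rw [hco]
      calc D.v (y j - algebraMap (Polynomial Fq) Finf (a j)) * μ (lam j)
          ≤ D.v (y j - algebraMap (Polynomial Fq) Finf (a j)) * μ (lam k) :=
            mul_le_mul_of_nonneg_left (condII_monotone hlam h hj.le) (D.v_nonneg _)
        _ < μ (lam k) := mul_lt_of_lt_one_left hposk (haspec j hj)
    · have hy0 : y j = 0 := by simp [hy, hj]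
      have ha0 : a j = 0 := by simp [ha, hj]
      rw [hy0, ha0]
      simpa [D.mu_zero hμ] using hposk
  linarith

lemma condII_le {μ : (Fin n → Finf) → ℝ} (hμ : D.IsNorm μ)
    {lam lam' : Fin n → (Fin n → Finf)}
    (hlam : ∀ i, lam i ∈ LambdaSet Fq Finf n) (hlam' : ∀ i, lam' i ∈ LambdaSet Fq Finf n)
    (h : CondII Fq μ lam) (h' : CondII Fq μ lam') (i : Fin n) :
    μ (lam i) ≤ μ (lam' i) := by
  classical
  by_contra hcon
  push_neg at hcon
  set W := Submodule.span Finf (lam '' {j : Fin n | j < i}) with hW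
  have hmem : ∀ j : Fin n, j ≤ i → lam' j ∈ W := by
    intro j hj
    have hμj : μ (lam' j) < μ (lam i) :=
      lt_of_le_of_lt (condII_monotone hlam' h' hj) hcon
    have hps : lam' j ∈ partialSpan Fq lam i := by
      by_contra hns
      exact absurd ((h i).2 (lam' j) (hlam' j) hns) (not_le.mpr hμj)
    exact partialSpan_subset_span lam i hps
  have hli : LinearIndependent Finf
      (lam' ∘ (fun k : Fin (i.val + 1) => (⟨k.val, lt_of_le_of_lt (Nat.lt_succ_iff.mp k.isLt) i.isLt⟩ : Fin n))) := by
    apply (D.condII_linearIndependent hμ hlam' h').comp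
    intro k1 k2 hk
    apply Fin.ext
    have := congrArg Fin.val hk
    simpa using this
  have hsub : Set.range (lam' ∘ (fun k : Fin (i.val + 1) =>
      (⟨k.val, lt_of_le_of_lt (Nat.lt_succ_iff.mp k.isLt) i.isLt⟩ : Fin n))) ⊆ ↑W := by
    rintro x ⟨k, rfl⟩
    exact hmem _ (by
      rw [Fin.le_def]
      exact Nat.lt_succ_iff.mp k.isLt)
  have h1 : Module.finrank Finf (Submodule.span Finf (Set.range (lam' ∘ (fun k : Fin (i.val + 1) =>
      (⟨k.val, lt_of_le_of_lt (Nat.lt_succ_iff.mp k.isLt) i.isLt⟩ : Fin n))))) = i.val + 1 := by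
    rw [finrank_span_eq_card hli, Fintype.card_fin]
  have h2 : Module.finrank Finf (Submodule.span Finf (Set.range (lam' ∘ (fun k : Fin (i.val + 1) =>
      (⟨k.val, lt_of_le_of_lt (Nat.lt_succ_iff.mp k.isLt) i.isLt⟩ : Fin n))))) ≤
      Module.finrank Finf W :=
    Submodule.finrank_mono (Submodule.span_le.mpr hsub)
  have h3 : Module.finrank Finf W ≤ i.val := finrank_partial_le lam i
  omega

end InftySetup

/-- choose a `μ`-minimal element of `S` if one exists -/
noncomputable def pick {n : ℕ} (μ : (Fin n → Finf) → ℝ) (S : Set (Fin n → Finf)) :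
    Fin n → Finf :=
  @dite _ (∃ m, m ∈ S ∧ ∀ y ∈ S, μ m ≤ μ y) (Classical.propDecidable _)
    (fun h => h.choose) (fun _ => 0)

lemma pick_spec {n : ℕ} (μ : (Fin n → Finf) → ℝ) (S : Set (Fin n → Finf))
    (h : ∃ m, m ∈ S ∧ ∀ y ∈ S, μ m ≤ μ y) :
    pick μ S ∈ S ∧ ∀ y ∈ S, μ (pick μ S) ≤ μ y := by
  rw [pick, dif_pos h]
  exact h.choose_spec

/-- successive minima, defined by strong recursion -/
noncomputable def minSeq (Fq : Type*) [Field Fq] [Fintype Fq] (Finf : Type*) [Field Finf]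
    [Algebra (Polynomial Fq) Finf] (n : ℕ) (μ : (Fin n → Finf) → ℝ) : ℕ → (Fin n → Finf) :=
  fun i =>
    if hin : i < n then
      pick μ (LambdaSet Fq Finf n \ partialSpan Fq
        (fun j : Fin n => if hj : (j : ℕ) < i then minSeq Fq Finf n μ j else 0) ⟨i, hin⟩)
    else 0
termination_by i => i
decreasing_by exact hj

theorem exists_condII (D : InftySetup Fq Finf) (μ : (Fin n → Finf) → ℝ) (hμ : D.IsNorm μ) :
    ∃ lam : Fin n → (Fin n → Finf),
      (∀ i, lam i ∈ LambdaSet Fq Finf n) ∧ CondII Fq μ lam := by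
  classical
  refine ⟨fun i => minSeq Fq Finf n μ i.val, ?_⟩
  set lam : Fin n → (Fin n → Finf) := fun i => minSeq Fq Finf n μ i.val with hlamdef
  have hstep : ∀ i : Fin n,
      lam i ∈ (LambdaSet Fq Finf n \ partialSpan Fq lam i) ∧
        ∀ y ∈ (LambdaSet Fq Finf n \ partialSpan Fq lam i), μ (lam i) ≤ μ y := by
    intro i
    have hps : partialSpan Fq
        (fun j : Fin n => if hj : (j : ℕ) < (i : ℕ) then minSeq Fq Finf n μ j else 0) i
        = partialSpan Fq lam i := by
      apply partialSpan_congr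
      intro j hj
      rw [dif_pos (show (j : ℕ) < (i : ℕ) from hj)]
    have hun : lam i = pick μ (LambdaSet Fq Finf n \ partialSpan Fq lam i) := by
      show minSeq Fq Finf n μ i.val = _
      rw [minSeq, dif_pos i.isLt]
      congr 1
      rw [← hps]
    have hexists : ∃ m, m ∈ (LambdaSet Fq Finf n \ partialSpan Fq lam i) ∧
        ∀ y ∈ (LambdaSet Fq Finf n \ partialSpan Fq lam i), μ m ≤ μ y := by
      obtain ⟨y, hy1, hy2⟩ := exists_notin_partialSpan (Fq := Fq) lam i
      exact D.exists_min μ hμ _ Set.diff_subset ⟨y, hy1, hy2⟩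
    rw [hun]
    exact pick_spec μ _ hexists
  refine ⟨fun i => (hstep i).1.1, fun i => ⟨(hstep i).1.2, fun y hy hyn => (hstep i).2 y ⟨hy, hyn⟩⟩⟩

end Helpers3

/-- Let `μ` be a norm on `F_∞^n`.  Then (1) there exists a family
`λ_1, …, λ_n ∈ Λ` satisfying condition (ii), and (2) any two such families have the same
norms `μ(λ_i)`. -/
theorem statement6 {Fq : Type*} [Field Fq] [Fintype Fq]
    {Finf : Type*} [Field Finf] [Algebra (Polynomial Fq) Finf]
    (D : InftySetup Fq Finf) (n : ℕ) (hn : 1 ≤ n)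
    (μ : (Fin n → Finf) → ℝ) (hμ : D.IsNorm μ) :
    (∃ lam : Fin n → (Fin n → Finf),
      (∀ i, lam i ∈ LambdaSet Fq Finf n) ∧ CondII Fq μ lam) ∧
    (∀ lam lam' : Fin n → (Fin n → Finf),
      (∀ i, lam i ∈ LambdaSet Fq Finf n) → (∀ i, lam' i ∈ LambdaSet Fq Finf n) →
      CondII Fq μ lam → CondII Fq μ lam' → ∀ i, μ (lam i) = μ (lam' i)) := by
  refine ⟨exists_condII D μ hμ, ?_⟩
  intro lam lam' h1 h2 hc hc' i
  exact le_antisymm (D.condII_le hμ h1 h2 hc hc' i) (D.condII_le hμ h2 h1 hc' hc i)
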